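/- Let $\lambda = \mu + i\sigma \in \mathbb{C}$ (with $\mu, \sigma \in \mathbb{R}$) be a root of the characteristic equation $\lambda = -e^{-\lambda \tau} - 1$ for some $\tau > 0$. Then $\mu \le 0$. -/

import Mathlib

theorem stmt_11 (τ : ℝ) (hτ : 0 < τ) (lam : ℂ)
    (h : lam = -Complex.exp (-lam * τ) - 1) : lam.re ≤ 0 := by
  by_contra hpos
  push_neg at hpos
  have h1 : lam + 1 = -Complex.exp (-lam * τ) := by
    linear_combination h
  have h2 : ‖lam + 1‖ = Real.exp ((-lam * τ).re) := by
    rw [h1, norm_neg, Complex.norm_exp]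
  have hre : (-lam * (τ:ℂ)).re = -(lam.re * τ) := by simp
  have h3 : Real.exp ((-lam * τ).re) < 1 := by
    rw [hre, Real.exp_lt_one_iff]
    nlinarith
  have h4 : (1:ℝ) < ‖lam + 1‖ := by
    calc (1:ℝ) < lam.re + 1 := by linarith
    _ = (lam + 1).re := by simp
    _ ≤ ‖lam + 1‖ := Complex.re_le_norm _
  linarith
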